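/- Let g, r₁, r₂, r₁′ be positive integers with r₁′ ≤ r₁ and r₁′ ≤ r₂, and let A ≥ 0 and B ≥ 1 be integers with g dividing A − B, A ≠ B, and A/(r₁′·r₂) + B/(r₁′·r₁) = g/(r₁·r₂) in ℚ. Then A = 0. -/

import Mathlib

/-- Arithmetic behind surjectivity in Lemma 4.1(2): if A ≥ 0, B ≥ 1 are
integers with g ∣ A − B, A ≠ B, and A/(r₁′r₂) + B/(r₁′r₁) = g/(r₁r₂),
then A = 0. -/
theorem hom_image_surjective (g r₁ r₂ r₁' A B : ℤ)
    (hg : 0 < g) (hr₁ : 0 < r₁) (hr₂ : 0 < r₂) (hr₁' : 0 < r₁')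
    (hle₁ : r₁' ≤ r₁) (hle₂ : r₁' ≤ r₂)
    (hA : 0 ≤ A) (hB : 1 ≤ B)
    (hdvd : g ∣ A - B) (hne : A ≠ B)
    (heq : (A : ℚ) / (r₁' * r₂) + (B : ℚ) / (r₁' * r₁) = (g : ℚ) / (r₁ * r₂)) :
    A = 0 := by
  have h1 : (r₁' : ℚ) ≠ 0 := by exact_mod_cast hr₁'.ne'
  have h2 : (r₁ : ℚ) ≠ 0 := by exact_mod_cast hr₁.ne'
  have h3 : (r₂ : ℚ) ≠ 0 := by exact_mod_cast hr₂.ne'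
  have key : A * r₁ + B * r₂ = g * r₁' := by
    have : (A : ℚ) * r₁ + B * r₂ = g * r₁' := by
      field_simp at heq
      have h4 : ((A : ℚ) * r₁ + B * r₂) * (r₁' * r₁ * r₂) = (g * r₁') * (r₁' * r₁ * r₂) := by
        linear_combination (r₁' * r₁ * r₂ : ℚ) * heq
      exact mul_right_cancel₀ (by simp [h1, h2, h3]) h4
    exact_mod_cast this
  -- |A - B| ≥ g
  obtain ⟨k, hk⟩ := hdvd
  have hk0 : k ≠ 0 := by
    rintro rfl
    exact hne (by linarith [hk])
  rcases lt_or_gt_of_ne hk0 with hneg | hpos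
  · -- A - B = g*k ≤ -g, so B ≥ A + g
    have hBA : B - A ≥ g := by nlinarith
    nlinarith
  · -- A - B ≥ g
    have hAB : A - B ≥ g := by nlinarith
    nlinarith
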